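/- For all monotone functions f : Fin m → Fin n and g : Fin n → Fin o and every permutation s of Fin o, the distributive-law data satisfy (g ∘ f)_s = g_s ∘ f_{s^g} and s^{g ∘ f} = (s^g)^f; moreover for the identity monotone function id : Fin n → Fin n one has id_s = id and s^{id} = s. -/

import Mathlib

/-- A permutation `σ` of `Fin m` is increasing on the fibers of `f : Fin m → Fin n` if for all
`x, y : Fin m` with `f x = f y` and `x < y` one has `σ x < σ y`. -/
def IncreasingOnFibers {m n : ℕ} (σ : Equiv.Perm (Fin m)) (f : Fin m → Fin n) : Prop :=
  ∀ x y : Fin m, f x = f y → x < y → σ x < σ y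

open Finset

/-- A monotone function on `Fin` is determined by the cardinalities of its sublevel sets. -/
lemma mem_lower_iff {m o : ℕ} (f : Fin m → Fin o) (hf : Monotone f) (v : Fin o) (x : Fin m) :
    f x ≤ v ↔ (x : ℕ) < (univ.filter (fun y => f y ≤ v)).card := by
  constructor
  · intro h
    have hsub : Finset.Iic x ⊆ univ.filter (fun y => f y ≤ v) := by
      intro y hy
      simp only [Finset.mem_Iic] at hy
      simp only [Finset.mem_filter, Finset.mem_univ, true_and]
      exact le_trans (hf hy) h
    have := Finset.card_le_card hsub
    rw [Fin.card_Iic] at this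
    omega
  · intro h
    by_contra hc
    have hsub : univ.filter (fun y => f y ≤ v) ⊆ Finset.Iio x := by
      intro y hy
      simp only [Finset.mem_filter, Finset.mem_univ, true_and] at hy
      simp only [Finset.mem_Iio]
      by_contra hyx
      exact hc (le_trans (hf (not_lt.mp hyx)) hy)
    have := Finset.card_le_card hsub
    rw [Fin.card_Iio] at this
    omega

/-- Uniqueness half of the distributive law. -/
lemma unique_pair {m o : ℕ} (F : Fin m → Fin o)
    (h₁ h₂ : Fin m → Fin o) (σ₁ σ₂ : Equiv.Perm (Fin m))
    (mh₁ : Monotone h₁) (mh₂ : Monotone h₂)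
    (i₁ : ∀ x y, F x = F y → x < y → σ₁ x < σ₁ y)
    (i₂ : ∀ x y, F x = F y → x < y → σ₂ x < σ₂ y)
    (e₁ : F = h₁ ∘ ⇑σ₁) (e₂ : F = h₂ ∘ ⇑σ₂) : h₁ = h₂ ∧ σ₁ = σ₂ := by
  have key : ∀ (h : Fin m → Fin o) (σ : Equiv.Perm (Fin m)), F = h ∘ ⇑σ → ∀ v : Fin o,
      (univ.filter (fun y => h y ≤ v)).card = (univ.filter (fun y => F y ≤ v)).card := by
    intro h σ e v
    have : univ.filter (fun y => h y ≤ v) = Finset.image σ (univ.filter (fun y => F y ≤ v)) := by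
      ext z
      simp only [Finset.mem_filter, Finset.mem_univ, true_and, Finset.mem_image]
      constructor
      · intro hz
        refine ⟨σ.symm z, ?_, σ.apply_symm_apply z⟩
        rw [e]; simpa using hz
      · rintro ⟨y, hy, rfl⟩
        rw [e] at hy; exact hy
    rw [this, Finset.card_image_of_injective _ σ.injective]
  have hh : h₁ = h₂ := by
    funext x
    have hle : ∀ v, h₁ x ≤ v ↔ h₂ x ≤ v := by
      intro v
      rw [mem_lower_iff h₁ mh₁ v x, mem_lower_iff h₂ mh₂ v x,
        key h₁ σ₁ e₁ v, key h₂ σ₂ e₂ v]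
    exact le_antisymm ((hle (h₂ x)).mpr le_rfl) ((hle (h₁ x)).mp le_rfl)
  refine ⟨hh, ?_⟩
  ext x
  -- restrict to the fiber of F at F x
  set v := F x with hv
  let S := {y : Fin m // F y = v}
  haveI : WellFoundedLT S := Finite.to_wellFoundedLT
  have f1mono : StrictMono (fun y : S => σ₁ y.1) := by
    intro a b hab
    exact i₁ a.1 b.1 (a.2.trans b.2.symm) hab
  have f2mono : StrictMono (fun y : S => σ₂ y.1) := by
    intro a b hab
    exact i₂ a.1 b.1 (a.2.trans b.2.symm) hab
  have hrange : Set.range (fun y : S => σ₁ y.1) = Set.range (fun y : S => σ₂ y.1) := by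
    have r : ∀ (h : Fin m → Fin o) (σ : Equiv.Perm (Fin m)), F = h ∘ ⇑σ →
        Set.range (fun y : S => σ y.1) = {z | h z = v} := by
      intro h σ e
      ext z
      simp only [Set.mem_range, Set.mem_setOf_eq]
      constructor
      · rintro ⟨⟨y, hy⟩, rfl⟩
        have := congrFun e y
        simp only [Function.comp_apply] at this
        rw [← this, hy]
      · intro hz
        refine ⟨⟨σ.symm z, ?_⟩, σ.apply_symm_apply z⟩
        have := congrFun e (σ.symm z)
        simp only [Function.comp_apply, σ.apply_symm_apply] at this
        rw [this, hz]
    rw [r h₁ σ₁ e₁, r h₂ σ₂ e₂, hh]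
  have := (f1mono.range_inj f2mono).mp hrange
  exact congrArg Fin.val (congrFun this ⟨x, rfl⟩)

/-- For all monotone functions `f : Fin m → Fin n` and `g : Fin n → Fin o` and every permutation
`s` of `Fin o`, the distributive-law data satisfy `(g ∘ f)_s = g_s ∘ f_{s^g}` and
`s^{g ∘ f} = (s^g)^f`; moreover for the identity monotone function `id : Fin n → Fin n` one has
`id_s = id` and `s^{id} = s`.  Here, for a monotone `f` and a permutation `s`, `(f_s, s^f)`
denotes the unique pair of a monotone function `f_s` and a permutation `s^f` increasing on the
fibers of `f` with `s ∘ f = f_s ∘ s^f`; the hypotheses below exhibit such pairs `(gs, sg)` for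
`(g, s)`, `(fsg, sgf)` for `(f, s^g = sg)` and `(gfs, sgf')` for `(g ∘ f, s)`. -/
theorem stmt_8 (m n o : ℕ) (f : Fin m → Fin n) (hf : Monotone f)
    (g : Fin n → Fin o) (hg : Monotone g) (s : Equiv.Perm (Fin o))
    (gs : Fin n → Fin o) (sg : Equiv.Perm (Fin n))
    (hgs : Monotone gs) (hsg : IncreasingOnFibers sg g) (heq1 : ⇑s ∘ g = gs ∘ ⇑sg)
    (fsg : Fin m → Fin n) (sgf : Equiv.Perm (Fin m))
    (hfsg : Monotone fsg) (hsgf : IncreasingOnFibers sgf f) (heq2 : ⇑sg ∘ f = fsg ∘ ⇑sgf)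
    (gfs : Fin m → Fin o) (sgf' : Equiv.Perm (Fin m))
    (hgfs : Monotone gfs) (hsgf' : IncreasingOnFibers sgf' (g ∘ f))
    (heq3 : ⇑s ∘ (g ∘ f) = gfs ∘ ⇑sgf') :
    (gfs = gs ∘ fsg ∧ sgf' = sgf) ∧
    ∀ (s' : Equiv.Perm (Fin n)) (h₁ : Fin n → Fin n) (σ₁ : Equiv.Perm (Fin n)),
      Monotone h₁ → IncreasingOnFibers σ₁ (id : Fin n → Fin n) → ⇑s' ∘ id = h₁ ∘ ⇑σ₁ →
      h₁ = id ∧ σ₁ = s' := by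
  constructor
  · -- apply uniqueness to F := s ∘ g ∘ f
    set F : Fin m → Fin o := ⇑s ∘ (g ∘ f) with hF
    have hFiber : ∀ x y : Fin m, F x = F y → g (f x) = g (f y) := fun x y h =>
      s.injective h
    have i1 : ∀ x y, F x = F y → x < y → sgf' x < sgf' y := fun x y h hxy =>
      hsgf' x y (hFiber x y h) hxy
    have i2 : ∀ x y, F x = F y → x < y → sgf x < sgf y := by
      intro x y h hxy
      have hgf := hFiber x y h
      rcases eq_or_lt_of_le (hf hxy.le) with hfe | hflt
      · exact hsgf x y hfe hxy
      · have h1 : sg (f x) < sg (f y) := hsg _ _ hgf hflt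
        have h2 : fsg (sgf x) < fsg (sgf y) := by
          have ex := congrFun heq2 x
          have ey := congrFun heq2 y
          simp only [Function.comp_apply] at ex ey
          rwa [ex, ey] at h1
        by_contra hc
        exact absurd (hfsg (not_lt.mp hc)) (not_le.mpr h2)
    have e1 : F = gfs ∘ ⇑sgf' := heq3
    have e2 : F = (gs ∘ fsg) ∘ ⇑sgf := by
      funext x
      have e2x := congrFun heq2 x
      have e1x := congrFun heq1 (f x)
      simp only [Function.comp_apply] at e2x e1x ⊢
      rw [hF]
      simp only [Function.comp_apply]
      rw [e1x, e2x]
    have := unique_pair F gfs (gs ∘ fsg) sgf' sgf hgfs (hgs.comp hfsg) i1 i2 e1 e2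
    exact this
  · intro s' h₁ σ₁ mh₁ _ heq
    simp only [Function.comp_id] at heq
    have hsurj : Function.Surjective h₁ := by
      intro z
      exact ⟨σ₁ (s'.symm z), by rw [← Function.comp_apply (f := h₁), ← heq]; simp⟩
    have hid : h₁ = id := by
      haveI : WellFoundedLT (Fin n) := Finite.to_wellFoundedLT
      have hinj : Function.Injective h₁ := Finite.injective_iff_surjective.mpr hsurj
      have hsm : StrictMono h₁ := mh₁.strictMono_of_injective hinj
      have : Set.range h₁ = Set.range (id : Fin n → Fin n) := by
        simp [Set.range_id, hsurj.range_eq]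
      exact (hsm.range_inj (strictMono_id (α := Fin n))).mp this
    refine ⟨hid, ?_⟩
    ext x
    have := congrFun heq x
    rw [hid] at this
    simp only [Function.comp_apply, id_eq] at this
    exact congrArg Fin.val this.symm
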